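/- Let f : (0,∞) → ℂ admit an asymptotic expansion f(t) ~ Σ_{k≥0} a_k t^{(k-n-1)/2} as t → 0⁺ and be rapidly decreasing as t → ∞. Then the Mellin transform F(s) = ∫₀^∞ t^{(s-1)/2} f(t) dt, convergent for Re(s) > n, extends meromorphically to ℂ with at most simple poles at s = n - k, k ∈ ℕ, with residue at s = n-k equal to 2 a_k. -/

import Mathlib

open Complex MeasureTheory Filter Set Asymptotics Topology

set_option maxHeartbeats 1000000

namespace MellinExtAux

noncomputable def P (n k : ℕ) : ℝ → ℂ :=
  Set.indicator (Ioc (0:ℝ) 1) (fun t => (t : ℂ) ^ (((k : ℂ) - n - 1) / 2))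

noncomputable def r (n : ℕ) (f : ℝ → ℂ) (a : ℕ → ℂ) (N : ℕ) : ℝ → ℂ :=
  fun t => f t - ∑ k ∈ Finset.range (N + 1), a k • P n k t

noncomputable def EE (n : ℕ) (f : ℝ → ℂ) (a : ℕ → ℂ) (N : ℕ) : ℂ → ℂ :=
  fun s => mellin (r n f a N) ((s + 1) / 2)
    + ∑ k ∈ Finset.range (N + 1), 2 * a k / (s - ((n : ℂ) - k))

lemma re_half (s : ℂ) : ((s + 1) / 2).re = (s.re + 1) / 2 := by
  rw [show (2:ℂ) = ((2:ℝ):ℂ) by norm_num, Complex.div_ofReal_re, add_re, one_re]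

lemma re_exp (n k : ℕ) : ((((k : ℂ) - n - 1)) / 2).re = ((k : ℝ) - n - 1) / 2 := by
  rw [show (2:ℂ) = ((2:ℝ):ℂ) by norm_num, Complex.div_ofReal_re]
  simp

lemma hasMellinP (n k : ℕ) {z : ℂ} (hz : ((n : ℝ) + 1 - k) / 2 < z.re) :
    HasMellin (P n k) z (1 / (z + ((k : ℂ) - n - 1) / 2)) := by
  apply hasMellin_cpow_Ioc
  rw [re_exp]
  linarith

lemma locInt_P (n k : ℕ) : LocallyIntegrableOn (P n k) (Ioi 0) := by
  rw [locallyIntegrableOn_iff isOpen_Ioi.isLocallyClosed]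
  intro K hK hKc
  have hcont : ContinuousOn (fun t : ℝ => (t : ℂ) ^ (((k : ℂ) - n - 1) / 2)) K := by
    intro t ht
    exact (continuousAt_ofReal_cpow_const _ _ (Or.inr (ne_of_gt (hK ht)))).continuousWithinAt
  have hint : IntegrableOn (fun t : ℝ => (t : ℂ) ^ (((k : ℂ) - n - 1) / 2)) K :=
    hcont.integrableOn_compact hKc
  rw [IntegrableOn, P, integrable_indicator_iff measurableSet_Ioc]
  exact hint.integrableOn

section

variable {n : ℕ} {f : ℝ → ℂ} {a : ℕ → ℂ}

lemma fO_top (hdec : ∀ m : ℕ, ∃ C : ℝ, ∀ t : ℝ, 1 ≤ t → ‖f t‖ ≤ C * t ^ (-(m : ℝ)))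
    (A : ℝ) : f =O[atTop] fun t : ℝ => t ^ (-A) := by
  obtain ⟨C, hC⟩ := hdec ⌈A⌉₊
  apply IsBigO.of_bound (max C 0)
  filter_upwards [eventually_ge_atTop (1:ℝ)] with t ht
  have ht0 : (0:ℝ) < t := lt_of_lt_of_le one_pos ht
  have h1 : ‖f t‖ ≤ C * t ^ (-(⌈A⌉₊:ℝ)) := hC t ht
  have h2 : C * t ^ (-(⌈A⌉₊:ℝ)) ≤ max C 0 * t ^ (-(⌈A⌉₊:ℝ)) :=
    mul_le_mul_of_nonneg_right (le_max_left _ _) (Real.rpow_nonneg ht0.le _)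
  have h3 : max C 0 * t ^ (-(⌈A⌉₊:ℝ)) ≤ max C 0 * t ^ (-A) :=
    mul_le_mul_of_nonneg_left
      (Real.rpow_le_rpow_of_exponent_le ht (neg_le_neg (Nat.le_ceil A))) (le_max_right _ _)
  rw [Real.norm_eq_abs, _root_.abs_of_nonneg (Real.rpow_nonneg ht0.le _)]
  linarith

lemma rO_top (hdec : ∀ m : ℕ, ∃ C : ℝ, ∀ t : ℝ, 1 ≤ t → ‖f t‖ ≤ C * t ^ (-(m : ℝ)))
    (N : ℕ) (A : ℝ) : (r n f a N) =O[atTop] fun t : ℝ => t ^ (-A) := by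
  refine (fO_top hdec A).congr' ?_ EventuallyEq.rfl
  filter_upwards [eventually_gt_atTop (1:ℝ)] with t ht
  have hnot : t ∉ Ioc (0:ℝ) 1 := fun h => absurd h.2 (not_le.mpr ht)
  simp [r, P, Set.indicator_of_notMem hnot]

lemma rO_bot
    (hexp : ∀ N : ℕ, ∃ C : ℝ, ∀ t ∈ Ioc (0 : ℝ) 1,
      ‖f t - ∑ k ∈ Finset.range (N + 1),
          a k * (t : ℂ) ^ (((k : ℂ) - n - 1) / 2)‖ ≤ C * t ^ (((N : ℝ) - n) / 2))
    (N : ℕ) : (r n f a N) =O[𝓝[>] (0:ℝ)] fun t : ℝ => t ^ (-(((n:ℝ) - N) / 2)) := by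
  obtain ⟨C, hC⟩ := hexp N
  apply IsBigO.of_bound C
  filter_upwards [Ioc_mem_nhdsGT (zero_lt_one)] with t ht
  have ht0 : (0:ℝ) < t := ht.1
  have hr : r n f a N t = f t - ∑ k ∈ Finset.range (N + 1),
      a k * (t : ℂ) ^ (((k : ℂ) - n - 1) / 2) := by
    simp [r, P, Set.indicator_of_mem ht, smul_eq_mul]
  rw [hr, Real.norm_eq_abs, _root_.abs_of_nonneg (Real.rpow_nonneg ht0.le _),
    show -(((n:ℝ) - N) / 2) = ((N:ℝ) - n) / 2 by ring]
  exact hC t ht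

lemma locInt_r (hf : ContinuousOn f (Ioi 0)) (N : ℕ) :
    LocallyIntegrableOn (r n f a N) (Ioi 0) := by
  have h1 : LocallyIntegrableOn f (Ioi 0) := hf.locallyIntegrableOn measurableSet_Ioi
  have h2 : LocallyIntegrableOn (fun t => ∑ k ∈ Finset.range (N + 1), a k • P n k t)
      (Ioi 0) := by
    rw [locallyIntegrableOn_iff isOpen_Ioi.isLocallyClosed]
    intro K hK hKc
    apply integrable_finset_sum
    intro k _
    exact ((locInt_P n k).integrableOn_compact_subset hK hKc).smul (a k)
  exact h1.sub h2

variable (hf : ContinuousOn f (Ioi 0))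
    (hexp : ∀ N : ℕ, ∃ C : ℝ, ∀ t ∈ Ioc (0 : ℝ) 1,
      ‖f t - ∑ k ∈ Finset.range (N + 1),
          a k * (t : ℂ) ^ (((k : ℂ) - n - 1) / 2)‖ ≤ C * t ^ (((N : ℝ) - n) / 2))
    (hdec : ∀ m : ℕ, ∃ C : ℝ, ∀ t : ℝ, 1 ≤ t → ‖f t‖ ≤ C * t ^ (-(m : ℝ)))

include hf hexp hdec

lemma convR (N : ℕ) {z : ℂ} (hz : ((n:ℝ) - N) / 2 < z.re) :
    MellinConvergent (r n f a N) z :=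
  mellinConvergent_of_isBigO_rpow (locInt_r hf N) (rO_top hdec N (z.re + 1))
    (lt_add_one _) (rO_bot hexp N) hz

lemma diffR (N : ℕ) {z : ℂ} (hz : ((n:ℝ) - N) / 2 < z.re) :
    DifferentiableAt ℂ (mellin (r n f a N)) z :=
  mellin_differentiableAt_of_isBigO_rpow (locInt_r hf N) (rO_top hdec N (z.re + 1))
    (lt_add_one _) (rO_bot hexp N) hz

lemma step (N : ℕ) (s : ℂ) (hs : (n:ℝ) - N - 1 < s.re) :
    EE n f a (N + 1) s = EE n f a N s := by
  have hzre : ((s + 1) / 2).re = (s.re + 1) / 2 := re_half s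
  have h1 : MellinConvergent (r n f a (N + 1)) ((s + 1) / 2) := by
    apply convR hf hexp hdec (N + 1)
    rw [hzre]; push_cast; linarith
  have h2 : HasMellin (P n (N + 1)) ((s + 1) / 2)
      (1 / ((s + 1) / 2 + (((N + 1 : ℕ) : ℂ) - n - 1) / 2)) := by
    apply hasMellinP n (N + 1)
    rw [hzre]; push_cast; linarith
  have h2' := h2.1.const_smul (a (N + 1))
  have h3 := hasMellin_add h1 h2'
  have heq : (fun t => r n f a (N + 1) t + a (N + 1) • P n (N + 1) t) = r n f a N := by
    funext t
    simp only [r, Finset.sum_range_succ, smul_eq_mul]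
    ring
  rw [heq] at h3
  have h4 : mellin (fun t => a (N + 1) • P n (N + 1) t) ((s + 1) / 2)
      = a (N + 1) • (1 / ((s + 1) / 2 + (((N + 1 : ℕ) : ℂ) - n - 1) / 2)) := by
    rw [mellin_const_smul, h2.2]
  have h5 : a (N + 1) • (1 / ((s + 1) / 2 + (((N + 1 : ℕ) : ℂ) - n - 1) / 2))
      = 2 * a (N + 1) / (s - ((n : ℂ) - ((N + 1 : ℕ) : ℂ))) := by
    have hq : (s + 1) / 2 + (((N + 1 : ℕ) : ℂ) - n - 1) / 2
        = (s - ((n : ℂ) - ((N + 1 : ℕ) : ℂ))) / 2 := by push_cast; ring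
    rw [smul_eq_mul, hq, one_div, inv_div]
    ring
  have h6 : mellin (r n f a N) ((s + 1) / 2) = mellin (r n f a (N + 1)) ((s + 1) / 2)
      + 2 * a (N + 1) / (s - ((n : ℂ) - ((N + 1 : ℕ) : ℂ))) := by
    rw [h3.2, h4, h5]
  show mellin (r n f a (N + 1)) ((s + 1) / 2) + _ = mellin (r n f a N) ((s + 1) / 2) + _
  rw [h6, Finset.sum_range_succ]
  push_cast
  ring

lemma consist : ∀ N M : ℕ, N ≤ M → ∀ s : ℂ, (n:ℝ) - N - 1 < s.re →
    EE n f a M s = EE n f a N s := by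
  intro N M hNM
  induction M, hNM using Nat.le_induction with
  | base => intro s _; rfl
  | succ M hNM ih =>
    intro s hs
    have hMN : (N:ℝ) ≤ M := Nat.cast_le.mpr hNM
    rw [step hf hexp hdec M s (by linarith), ih s hs]

lemma hasMellin_f {z : ℂ} (hz : ((n:ℝ) + 1) / 2 < z.re) :
    HasMellin f z (mellin (r n f a 0) z + a 0 • (1 / (z + (((0 : ℕ) : ℂ) - n - 1) / 2))) := by
  have h1 : MellinConvergent (r n f a 0) z := by
    apply convR hf hexp hdec 0
    push_cast; linarith
  have h2 : HasMellin (P n 0) z (1 / (z + (((0 : ℕ) : ℂ) - n - 1) / 2)) := by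
    apply hasMellinP n 0
    push_cast; linarith
  have h3 := hasMellin_add h1 (h2.1.const_smul (a 0))
  have heq : (fun t => r n f a 0 t + a 0 • P n 0 t) = f := by
    funext t; simp [r, Finset.sum_range_one]
  rw [heq, mellin_const_smul, h2.2] at h3
  exact h3

end

end MellinExtAux

open MellinExtAux in
/-- Meromorphic extension of a Mellin-type transform: if `f` has an asymptotic
expansion `f(t) ~ Σ a_k t^{(k-n-1)/2}` at `t → 0⁺` and is rapidly decreasing
at `∞`, then `F(s) = ∫₀^∞ t^{(s-1)/2} f(t) dt` (convergent for `Re s > n`)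
extends meromorphically to `ℂ` with at most simple poles at `s = n - k`,
`k ∈ ℕ`, with residue `2 a_k` at `s = n - k`. -/
theorem mellin_meromorphic_extension
    (n : ℕ) (hn : 0 < n) (f : ℝ → ℂ) (hf : ContinuousOn f (Ioi 0))
    (a : ℕ → ℂ)
    (hexp : ∀ N : ℕ, ∃ C : ℝ, ∀ t ∈ Ioc (0 : ℝ) 1,
      ‖f t - ∑ k ∈ Finset.range (N + 1),
          a k * (t : ℂ) ^ (((k : ℂ) - n - 1) / 2)‖ ≤
        C * t ^ (((N : ℝ) - n) / 2))
    (hdec : ∀ m : ℕ, ∃ C : ℝ, ∀ t : ℝ, 1 ≤ t → ‖f t‖ ≤ C * t ^ (-(m : ℝ))) :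
    ∃ F : ℂ → ℂ,
      (∀ s : ℂ, (n : ℝ) < s.re →
        IntegrableOn (fun t : ℝ => (t : ℂ) ^ ((s - 1) / 2) * f t) (Ioi 0) ∧
        F s = ∫ t in Ioi (0 : ℝ), (t : ℂ) ^ ((s - 1) / 2) * f t) ∧
      (∀ s₀ : ℂ, (∀ k : ℕ, s₀ ≠ (n : ℂ) - k) → AnalyticAt ℂ F s₀) ∧
      (∀ k : ℕ,
        Tendsto (fun s : ℂ => (s - ((n : ℂ) - k)) * F s)
          (nhdsWithin ((n : ℂ) - k) {s | s ≠ (n : ℂ) - k})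
          (nhds (2 * a k))) := by
  classical
  refine ⟨fun s => EE n f a ⌈(n:ℝ) - s.re⌉₊ s, ?_, ?_, ?_⟩
  · -- convergence and value for Re s > n
    intro s hs
    have hz : ((n:ℝ) + 1) / 2 < ((s + 1) / 2).re := by rw [re_half]; linarith
    have hM := hasMellin_f hf hexp hdec hz
    have hexp1 : (s + 1) / 2 - 1 = (s - 1) / 2 := by ring
    constructor
    · have h := hM.1
      rw [MellinConvergent] at h
      simp only [hexp1, smul_eq_mul] at h
      exact h
    · have hceil : ⌈(n:ℝ) - s.re⌉₊ = 0 := Nat.ceil_eq_zero.mpr (by linarith)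
      have hmf : mellin f ((s + 1) / 2)
          = ∫ t in Ioi (0:ℝ), (t : ℂ) ^ ((s - 1) / 2) * f t := by
        rw [mellin]
        simp_rw [hexp1, smul_eq_mul]
      show EE n f a ⌈(n:ℝ) - s.re⌉₊ s = _
      rw [hceil, ← hmf, hM.2]
      have hq : (s + 1) / 2 + (((0 : ℕ) : ℂ) - n - 1) / 2 = (s - ((n : ℂ) - ((0:ℕ):ℂ))) / 2 := by
        push_cast; ring
      have hEE : EE n f a 0 s = mellin (r n f a 0) ((s + 1) / 2)
          + 2 * a 0 / (s - ((n : ℂ) - ((0:ℕ):ℂ))) := by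
        simp only [EE, Nat.zero_add, Finset.sum_range_one]
      rw [hEE]
      congr 1
      rw [smul_eq_mul, hq, one_div, inv_div]
      ring
  · -- analyticity away from the poles
    intro s₀ hpole
    set M := ⌈(n:ℝ) - s₀.re⌉₊ + 1 with hMdef
    have hUopen : IsOpen {s : ℂ | (n:ℝ) - M < s.re} :=
      isOpen_lt continuous_const Complex.continuous_re
    have hU0 : s₀ ∈ {s : ℂ | (n:ℝ) - M < s.re} := by
      have := Nat.le_ceil ((n:ℝ) - s₀.re)
      simp only [mem_setOf_eq, hMdef]
      push_cast
      linarith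
    have hFE : ∀ s ∈ {s : ℂ | (n:ℝ) - M < s.re},
        EE n f a ⌈(n:ℝ) - s.re⌉₊ s = EE n f a M s := by
      intro s hs
      have hs' : (n:ℝ) - M < s.re := hs
      have h1 : ⌈(n:ℝ) - s.re⌉₊ ≤ M := Nat.ceil_le.mpr (by linarith)
      have h2 : (n:ℝ) - ⌈(n:ℝ) - s.re⌉₊ - 1 < s.re := by
        have := Nat.le_ceil ((n:ℝ) - s.re); linarith
      exact (consist hf hexp hdec _ M h1 s h2).symm
    have hTclosed : IsClosed ((fun k : ℕ => (n:ℂ) - k) '' Iic M) :=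
      ((finite_Iic M).image _).isClosed
    have hVopen : IsOpen ({s : ℂ | (n:ℝ) - M < s.re} \ (fun k : ℕ => (n:ℂ) - k) '' Iic M) :=
      hUopen.sdiff hTclosed
    have hs₀V : s₀ ∈ {s : ℂ | (n:ℝ) - M < s.re} \ (fun k : ℕ => (n:ℂ) - k) '' Iic M := by
      refine ⟨hU0, ?_⟩
      rintro ⟨k, -, hk⟩
      exact hpole k hk.symm
    have hdiff : DifferentiableOn ℂ (EE n f a M)
        ({s : ℂ | (n:ℝ) - M < s.re} \ (fun k : ℕ => (n:ℂ) - k) '' Iic M) := by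
      intro s hs
      apply DifferentiableAt.differentiableWithinAt
      show DifferentiableAt ℂ (fun s => mellin (r n f a M) ((s + 1) / 2)
        + ∑ k ∈ Finset.range (M + 1), 2 * a k / (s - ((n : ℂ) - k))) s
      apply DifferentiableAt.add
      · have hd : DifferentiableAt ℂ (mellin (r n f a M)) ((s + 1) / 2) := by
          apply diffR hf hexp hdec M
          rw [re_half]
          have hs' : (n:ℝ) - M < s.re := hs.1
          linarith
        exact hd.comp (f := fun s : ℂ => (s + 1) / 2) s
          ((differentiableAt_id.add_const (1:ℂ)).div_const (2:ℂ))
      · apply DifferentiableAt.fun_sum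
        intro j hj
        refine DifferentiableAt.div (differentiableAt_const _)
          (differentiableAt_id.sub_const _) ?_
        refine sub_ne_zero.mpr ?_
        intro h
        exact hs.2 ⟨j, mem_Iic.mpr (Nat.lt_succ_iff.mp (Finset.mem_range.mp hj)), h.symm⟩
    have hA : AnalyticAt ℂ (EE n f a M) s₀ := hdiff.analyticAt (hVopen.mem_nhds hs₀V)
    apply hA.congr
    filter_upwards [hUopen.mem_nhds hU0] with s hs
    exact (hFE s hs).symm
  · -- residues
    intro k
    set M := k + 1 with hMdef
    have hs₀re : ((n:ℂ) - k).re = (n:ℝ) - k := by simp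
    have hUopen : IsOpen {s : ℂ | (n:ℝ) - M < s.re} :=
      isOpen_lt continuous_const Complex.continuous_re
    have hU0 : (n:ℂ) - k ∈ {s : ℂ | (n:ℝ) - M < s.re} := by
      simp only [mem_setOf_eq, hs₀re, hMdef]
      push_cast
      linarith
    have hFE : ∀ s ∈ {s : ℂ | (n:ℝ) - M < s.re},
        EE n f a ⌈(n:ℝ) - s.re⌉₊ s = EE n f a M s := by
      intro s hs
      have hs' : (n:ℝ) - M < s.re := hs
      have h1 : ⌈(n:ℝ) - s.re⌉₊ ≤ M := Nat.ceil_le.mpr (by linarith)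
      have h2 : (n:ℝ) - ⌈(n:ℝ) - s.re⌉₊ - 1 < s.re := by
        have := Nat.le_ceil ((n:ℝ) - s.re); linarith
      exact (consist hf hexp hdec _ M h1 s h2).symm
    have key : Tendsto (fun s : ℂ => (s - ((n:ℂ) - k)) * EE n f a M s)
        (nhdsWithin ((n:ℂ) - k) {s | s ≠ (n:ℂ) - k}) (nhds (2 * a k)) := by
      have hmul : ∀ s : ℂ, (s - ((n:ℂ) - k)) * EE n f a M s
          = (s - ((n:ℂ) - k)) * mellin (r n f a M) ((s + 1) / 2)
            + ∑ j ∈ Finset.range (M + 1),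
                (s - ((n:ℂ) - k)) * (2 * a j / (s - ((n : ℂ) - j))) := by
        intro s
        simp only [EE]
        rw [mul_add, Finset.mul_sum]
      have T1 : Tendsto (fun s : ℂ => (s - ((n:ℂ) - k)) * mellin (r n f a M) ((s + 1) / 2))
          (nhdsWithin ((n:ℂ) - k) {s | s ≠ (n:ℂ) - k}) (nhds 0) := by
        have hd : DifferentiableAt ℂ (fun s : ℂ => mellin (r n f a M) ((s + 1) / 2))
            ((n:ℂ) - k) := by
          have hd0 : DifferentiableAt ℂ (mellin (r n f a M)) ((((n:ℂ) - k) + 1) / 2) := by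
            apply diffR hf hexp hdec M
            rw [re_half, hs₀re, hMdef]
            push_cast
            linarith
          exact hd0.comp (f := fun s : ℂ => (s + 1) / 2) ((n:ℂ) - k)
              ((differentiableAt_id.add_const (1:ℂ)).div_const (2:ℂ))
        have hc : ContinuousAt (fun s : ℂ => mellin (r n f a M) ((s + 1) / 2)) ((n:ℂ) - k) :=
          hd.continuousAt
        have ht : Tendsto (fun s : ℂ => (s - ((n:ℂ) - k)) * mellin (r n f a M) ((s + 1) / 2))
            (nhds ((n:ℂ) - k))
            (nhds ((((n:ℂ) - k) - ((n:ℂ) - k)) * mellin (r n f a M) (((((n:ℂ) - k)) + 1) / 2))) :=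
          ((continuousAt_id.sub continuousAt_const).mul hc)
        simpa using ht.mono_left nhdsWithin_le_nhds
      have T2 : Tendsto (fun s : ℂ => ∑ j ∈ Finset.range (M + 1),
            (s - ((n:ℂ) - k)) * (2 * a j / (s - ((n : ℂ) - j))))
          (nhdsWithin ((n:ℂ) - k) {s | s ≠ (n:ℂ) - k}) (nhds (2 * a k)) := by
        have hsum : Tendsto (fun s : ℂ => ∑ j ∈ Finset.range (M + 1),
              (s - ((n:ℂ) - k)) * (2 * a j / (s - ((n : ℂ) - j))))
            (nhdsWithin ((n:ℂ) - k) {s | s ≠ (n:ℂ) - k})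
            (nhds (∑ j ∈ Finset.range (M + 1), if j = k then 2 * a j else 0)) := by
          apply tendsto_finset_sum
          intro j hj
          by_cases hjk : j = k
          · subst hjk
            simp only [if_pos rfl, reduceIte]
            apply Tendsto.congr' ?_ tendsto_const_nhds
            filter_upwards [self_mem_nhdsWithin] with s hs
            have hne : s - ((n:ℂ) - j) ≠ 0 := sub_ne_zero.mpr hs
            field_simp
          · simp only [if_neg hjk]
            have hne : ((n:ℂ) - k) - ((n:ℂ) - j) ≠ 0 := by
              rw [show ((n:ℂ) - k) - ((n:ℂ) - j) = (j:ℂ) - k by ring]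
              exact sub_ne_zero.mpr (fun h => hjk (Nat.cast_injective h))
            have ht : Tendsto (fun s : ℂ => (s - ((n:ℂ) - k)) * (2 * a j / (s - ((n : ℂ) - j))))
                (nhds ((n:ℂ) - k))
                (nhds ((((n:ℂ) - k) - ((n:ℂ) - k))
                  * (2 * a j / (((n:ℂ) - k) - ((n : ℂ) - j))))) :=
              (continuousAt_id.sub continuousAt_const).mul
                (continuousAt_const.div (continuousAt_id.sub continuousAt_const) hne)
            simpa using ht.mono_left nhdsWithin_le_nhds
        rwa [Finset.sum_ite_eq' (Finset.range (M + 1)) k (fun j => 2 * a j),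
          if_pos (Finset.mem_range.mpr (by omega))] at hsum
      have := T1.add T2
      rw [zero_add] at this
      exact this.congr fun s => (hmul s).symm
    apply Tendsto.congr' ?_ key
    filter_upwards [mem_nhdsWithin_of_mem_nhds (hUopen.mem_nhds hU0)] with s hs
    rw [hFE s hs]
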